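/- Let (q_k)_{k≥0} be nonnegative reals with q_0 > 0. For every f ∈ L¹(G_m) and every n ∈ ℕ, t_{M_n} f = D_{M_n} ∗ f − (1/Q_{M_n}) Σ_{j=0}^{M_n−2} (q_j − q_{j+1}) · j · ((ψ_{M_n−1} · conj(K_j)) ∗ f) − (q_{M_n−1}/Q_{M_n}) · M_n · ((ψ_{M_n−1} · conj(K_{M_n})) ∗ f) + (q_{M_n−1}/Q_{M_n}) · ((ψ_{M_n−1} · conj(D_{M_n})) ∗ f), where conj denotes complex conjugation. -/

import Mathlib

open MeasureTheory Filter Finset Asymptotics ENNReal NNReal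

noncomputable section

namespace VilenkinPaper

/-- The Vilenkin group `G_m = ∏_k ℤ_{m_k}`. -/
abbrev G (m : ℕ → ℕ) : Type := ∀ k, ZMod (m k)

/-- The generalized powers `M_0 = 1`, `M_{k+1} = m_k M_k`. -/
def M (m : ℕ → ℕ) : ℕ → ℕ
  | 0 => 1
  | k + 1 => m k * M m k

/-- The basic neighborhoods `I_n = {y : y_0 = ⋯ = y_{n-1} = 0}`. -/
def I (m : ℕ → ℕ) (n : ℕ) : Set (G m) := {y | ∀ k < n, y k = 0}

/-- The generalized Rademacher functions `r_k(x) = exp(2πi x_k / m_k)`. -/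
def rad (m : ℕ → ℕ) (k : ℕ) (x : G m) : ℂ :=
  Complex.exp (2 * Real.pi * Complex.I * ((x k).val : ℂ) / (m k : ℂ))

/-- The `j`-th digit of `n` in the base determined by `m`. -/
def digit (m : ℕ → ℕ) (n j : ℕ) : ℕ := (n / M m j) % m j

/-- The Vilenkin functions `ψ_n = ∏_k r_k^{n_k}`. -/
def psi (m : ℕ → ℕ) (n : ℕ) (x : G m) : ℂ :=
  ∏ᶠ k, rad m k x ^ digit m n k

/-- Vilenkin-Fourier coefficient `f̂(k) = ∫ f ψ̄_k dμ`. -/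
def fourierCoeff (m : ℕ → ℕ) (μ : Measure (G m)) (f : G m → ℂ) (k : ℕ) : ℂ :=
  ∫ x, f x * (starRingEnd ℂ) (psi m k x) ∂μ

/-- Partial sums `S_n f = ∑_{k=0}^{n-1} f̂(k) ψ_k`. -/
def S (m : ℕ → ℕ) (μ : Measure (G m)) (n : ℕ) (f : G m → ℂ) (x : G m) : ℂ :=
  ∑ k ∈ Finset.range n, fourierCoeff m μ f k * psi m k x

/-- Fejér means `σ_n f = (1/n) ∑_{k=1}^n S_k f`. -/
def sigma (m : ℕ → ℕ) (μ : Measure (G m)) (n : ℕ) (f : G m → ℂ) (x : G m) : ℂ :=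
  (n : ℂ)⁻¹ * ∑ k ∈ Finset.Icc 1 n, S m μ k f x

/-- Dirichlet kernels `D_n = ∑_{k=0}^{n-1} ψ_k`. -/
def D (m : ℕ → ℕ) (n : ℕ) (x : G m) : ℂ := ∑ k ∈ Finset.range n, psi m k x

/-- Fejér kernels `K_n = (1/n) ∑_{k=1}^n D_k`. -/
def K (m : ℕ → ℕ) (n : ℕ) (x : G m) : ℂ := (n : ℂ)⁻¹ * ∑ k ∈ Finset.Icc 1 n, D m k x

/-- Convolution `(g ∗ f)(x) = ∫ f(t) g(x - t) dμ(t)`. -/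
def conv (m : ℕ → ℕ) (μ : Measure (G m)) (g f : G m → ℂ) (x : G m) : ℂ :=
  ∫ t, f t * g (x - t) ∂μ

/-- `Q_n = ∑_{k=0}^{n-1} q_k`. -/
def Q (q : ℕ → ℝ) (n : ℕ) : ℝ := ∑ k ∈ Finset.range n, q k

/-- Nörlund means `t_n f = (1/Q_n) ∑_{k=1}^n q_{n-k} S_k f`. -/
def T (m : ℕ → ℕ) (μ : Measure (G m)) (q : ℕ → ℝ) (n : ℕ) (f : G m → ℂ) (x : G m) : ℂ :=
  ((Q q n : ℝ) : ℂ)⁻¹ * ∑ k ∈ Finset.Icc 1 n, ((q (n - k) : ℝ) : ℂ) * S m μ k f x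

/-- The modulus of continuity `ω_p(1/M_n, f) = sup_{t ∈ I_n} ‖f(·+t) - f‖_p`. -/
def omega (m : ℕ → ℕ) (μ : Measure (G m)) (p : ℝ≥0∞) (f : G m → ℂ) (n : ℕ) : ℝ :=
  ⨆ t ∈ I m n, (eLpNorm (fun x => f (x + t) - f x) p μ).toReal

section AuxLemmas

variable {m : ℕ → ℕ}

lemma M_pos (hm : ∀ k, 2 ≤ m k) : ∀ k, 0 < M m k
  | 0 => Nat.one_pos
  | (k+1) => Nat.mul_pos (by have := hm k; omega) (M_pos hm k)

lemma two_pow_le_M (hm : ∀ k, 2 ≤ m k) : ∀ k, 2 ^ k ≤ M m k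
  | 0 => le_refl 1
  | (k+1) => by
      calc 2 ^ (k+1) = 2 * 2 ^ k := by ring
      _ ≤ m k * M m k := Nat.mul_le_mul (hm k) (two_pow_le_M hm k)
      _ = M m (k+1) := rfl

lemma M_dvd {k n : ℕ} (h : k ≤ n) : M m k ∣ M m n := by
  induction h with
  | refl => exact dvd_rfl
  | step _ ih => exact Dvd.dvd.mul_left ih _

lemma lt_M_self (hm : ∀ k, 2 ≤ m k) (ℓ : ℕ) : ℓ < M m ℓ :=
  lt_of_lt_of_le (Nat.lt_two_pow_self (n := ℓ)) (two_pow_le_M hm ℓ)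

lemma digit_eq_zero_of_lt {ℓ k : ℕ} (h : ℓ < M m k) : digit m ℓ k = 0 := by
  unfold digit; rw [Nat.div_eq_of_lt h, Nat.zero_mod]

lemma digit_lt (hm : ∀ k, 2 ≤ m k) (ℓ k : ℕ) : digit m ℓ k < m k :=
  Nat.mod_lt _ (by have := hm k; omega)

lemma div_compl {C P i : ℕ} (hP : 0 < P) (hPC : P ∣ C) (hi : i < C) :
    (C - 1 - i) / P = C / P - 1 - i / P := by
  obtain ⟨c, rfl⟩ := hPC
  have hu : i / P < c := by
    rw [Nat.div_lt_iff_lt_mul hP]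
    calc i < P * c := hi
    _ = c * P := mul_comm _ _
  have hv := Nat.mod_lt i hP
  have hmod := Nat.div_add_mod i P
  have hkey : P * c - 1 - i = (P - 1 - i % P) + P * (c - i / P - 1) := by
    have h1 : P * (c - i / P - 1) = P * c - P * (i / P) - P := by
      rw [Nat.mul_sub, Nat.mul_sub, Nat.mul_one]
    have h2 : P * (i / P) + P ≤ P * c := by
      calc P * (i / P) + P = P * (i / P + 1) := by ring
      _ ≤ P * c := Nat.mul_le_mul_left _ hu
    omega
  rw [hkey, Nat.add_mul_div_left _ _ hP, Nat.div_eq_of_lt (by omega),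
    Nat.mul_div_cancel_left _ hP]
  omega

lemma mod_compl {a b u : ℕ} (hb : 0 < b) (hab : b ∣ a) (hu : u < a) :
    (a - 1 - u) % b = b - 1 - u % b := by
  obtain ⟨a', rfl⟩ := hab
  have ht := Nat.mod_lt u hb
  have hmod := Nat.div_add_mod u b
  have hs : u / b < a' := by
    rw [Nat.div_lt_iff_lt_mul hb]
    calc u < b * a' := hu
    _ = a' * b := mul_comm _ _
  have hkey : b * a' - 1 - u = (b - 1 - u % b) + b * (a' - u / b - 1) := by
    have h1 : b * (a' - u / b - 1) = b * a' - b * (u / b) - b := by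
      rw [Nat.mul_sub, Nat.mul_sub, Nat.mul_one]
    have h2 : b * (u / b) + b ≤ b * a' := by
      calc b * (u / b) + b = b * (u / b + 1) := by ring
      _ ≤ b * a' := Nat.mul_le_mul_left _ hs
    omega
  rw [hkey, Nat.add_mul_mod_self_left, Nat.mod_eq_of_lt (by omega)]

lemma digit_compl (hm : ∀ k, 2 ≤ m k) {n i k : ℕ} (hk : k < n) (hi : i < M m n) :
    digit m (M m n - 1 - i) k = m k - 1 - digit m i k := by
  have hP : 0 < M m k := M_pos hm k
  have hPC : M m k ∣ M m n := M_dvd (le_of_lt hk)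
  have hbc : m k ∣ M m n / M m k := by
    obtain ⟨d, hd⟩ := M_dvd (show k + 1 ≤ n from hk)
    refine ⟨d, ?_⟩
    rw [hd, show M m (k+1) * d = M m k * (m k * d) from by
      show (m k * M m k) * d = _; ring, Nat.mul_div_cancel_left _ hP]
  have hu : i / M m k < M m n / M m k := Nat.div_lt_div_of_lt_of_dvd hPC hi
  unfold digit
  rw [div_compl hP hPC hi, mod_compl (by have := hm k; omega) hbc hu]

lemma rad_ne_zero (k : ℕ) (x : G m) : rad m k x ≠ 0 := Complex.exp_ne_zero _

lemma rad_eq (k : ℕ) (x : G m) :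
    rad m k x = Complex.exp (((2 * Real.pi * ((x k).val : ℝ) / (m k : ℝ) : ℝ) : ℂ) * Complex.I) := by
  unfold rad; congr 1; push_cast; ring

lemma norm_rad (k : ℕ) (x : G m) : ‖rad m k x‖ = 1 := by
  rw [rad_eq, Complex.norm_exp_ofReal_mul_I]

lemma exp_mod (hm : ∀ k, 2 ≤ m k) (k v : ℕ) :
    Complex.exp (2 * Real.pi * Complex.I * ((v % m k : ℕ) : ℂ) / (m k : ℂ))
    = Complex.exp (2 * Real.pi * Complex.I * (v : ℂ) / (m k : ℂ)) := by
  have hm0 : (m k : ℂ) ≠ 0 := Nat.cast_ne_zero.mpr (by have := hm k; omega)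
  conv_rhs => rw [← Nat.mod_add_div v (m k)]
  rw [show (((v % m k + m k * (v / m k) : ℕ)) : ℂ)
      = ((v % m k : ℕ) : ℂ) + (m k : ℂ) * ((v / m k : ℕ) : ℂ) from by push_cast; ring]
  rw [show 2 * (Real.pi : ℂ) * Complex.I * (((v % m k : ℕ) : ℂ) + (m k : ℂ) * ((v / m k : ℕ) : ℂ)) / (m k : ℂ)
      = 2 * (Real.pi : ℂ) * Complex.I * ((v % m k : ℕ) : ℂ) / (m k : ℂ)
        + ((v / m k : ℕ) : ℂ) * (2 * (Real.pi : ℂ) * Complex.I) from by field_simp]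
  rw [Complex.exp_add,
    show ((v / m k : ℕ) : ℂ) = (((v / m k : ℕ) : ℤ) : ℂ) from (Int.cast_natCast _).symm,
    Complex.exp_int_mul_two_pi_mul_I, mul_one]

lemma rad_add (hm : ∀ k, 2 ≤ m k) (k : ℕ) (x y : G m) :
    rad m k (x + y) = rad m k x * rad m k y := by
  haveI : NeZero (m k) := ⟨by have := hm k; omega⟩
  have hm0 : (m k : ℂ) ≠ 0 := Nat.cast_ne_zero.mpr (by have := hm k; omega)
  unfold rad
  rw [show (x + y) k = x k + y k from rfl, ZMod.val_add, exp_mod hm, ← Complex.exp_add]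
  congr 1
  push_cast
  field_simp

lemma rad_zero (hm : ∀ k, 2 ≤ m k) (k : ℕ) : rad m k (0 : G m) = 1 := by
  haveI : NeZero (m k) := ⟨by have := hm k; omega⟩
  unfold rad
  rw [show (0 : G m) k = 0 from rfl, ZMod.val_zero]
  simp

lemma conj_rad_mul (k : ℕ) (x : G m) : (starRingEnd ℂ) (rad m k x) * rad m k x = 1 := by
  unfold rad
  rw [← Complex.exp_conj, ← Complex.exp_add,
    show (starRingEnd ℂ) (2 * (Real.pi : ℂ) * Complex.I * (((x k).val : ℕ) : ℂ) / ((m k : ℕ) : ℂ))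
      = -(2 * (Real.pi : ℂ) * Complex.I * (((x k).val : ℕ) : ℂ) / ((m k : ℕ) : ℂ)) from by
      rw [map_div₀]
      simp [Complex.conj_I, map_ofNat]
      ring]
  rw [neg_add_cancel, Complex.exp_zero]

lemma rad_neg (hm : ∀ k, 2 ≤ m k) (k : ℕ) (x : G m) :
    rad m k (-x) = (starRingEnd ℂ) (rad m k x) := by
  have h1 : rad m k (-x) * rad m k x = 1 := by
    rw [← rad_add hm, neg_add_cancel, rad_zero hm]
  exact mul_right_cancel₀ (rad_ne_zero k x) (h1.trans (conj_rad_mul k x).symm)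

lemma psi_eq_prod (hm : ∀ k, 2 ≤ m k) {ℓ B : ℕ} (h : ℓ < M m B) (x : G m) :
    psi m ℓ x = ∏ k ∈ Finset.range B, rad m k x ^ digit m ℓ k := by
  unfold psi
  refine finprod_eq_prod_of_mulSupport_subset _ ?_
  intro k hk
  simp only [Function.mem_mulSupport] at hk
  by_contra hkB
  simp only [Finset.coe_range, Set.mem_Iio, not_lt] at hkB
  have hle : M m B ≤ M m k := Nat.le_of_dvd (M_pos hm k) (M_dvd hkB)
  exact hk (by rw [digit_eq_zero_of_lt (lt_of_lt_of_le h hle), pow_zero])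

lemma psi_add (hm : ∀ k, 2 ≤ m k) (ℓ : ℕ) (x y : G m) :
    psi m ℓ (x + y) = psi m ℓ x * psi m ℓ y := by
  rw [psi_eq_prod hm (lt_M_self hm ℓ), psi_eq_prod hm (lt_M_self hm ℓ),
    psi_eq_prod hm (lt_M_self hm ℓ), ← Finset.prod_mul_distrib]
  exact Finset.prod_congr rfl fun k _ => by rw [rad_add hm, mul_pow]

lemma conj_psi (hm : ∀ k, 2 ≤ m k) (ℓ : ℕ) (x : G m) :
    (starRingEnd ℂ) (psi m ℓ x) = psi m ℓ (-x) := by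
  rw [psi_eq_prod hm (lt_M_self hm ℓ) x, psi_eq_prod hm (lt_M_self hm ℓ) (-x), map_prod]
  exact Finset.prod_congr rfl fun k _ => by rw [map_pow, ← rad_neg hm]

lemma psi_sub (hm : ∀ k, 2 ≤ m k) (ℓ : ℕ) (x t : G m) :
    psi m ℓ (x - t) = psi m ℓ x * (starRingEnd ℂ) (psi m ℓ t) := by
  rw [sub_eq_add_neg, psi_add hm, conj_psi hm]

lemma norm_psi (hm : ∀ k, 2 ≤ m k) (ℓ : ℕ) (x : G m) : ‖psi m ℓ x‖ = 1 := by
  rw [psi_eq_prod hm (lt_M_self hm ℓ)]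
  rw [norm_prod]
  exact Finset.prod_eq_one fun k _ => by rw [norm_pow, norm_rad, one_pow]

lemma digit_M_sub_one (hm : ∀ k, 2 ≤ m k) {n k : ℕ} (hk : k < n) :
    digit m (M m n - 1) k = m k - 1 := by
  have h := digit_compl hm hk (M_pos hm n)
  simpa [digit] using h

lemma psi_M_sub (hm : ∀ k, 2 ≤ m k) (n i : ℕ) (hi : i < M m n) (y : G m) :
    psi m (M m n - 1 - i) y = psi m (M m n - 1) y * (starRingEnd ℂ) (psi m i y) := by
  have h1 : M m n - 1 - i < M m n := by have := M_pos hm n; omega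
  have h2 : M m n - 1 < M m n := by have := M_pos hm n; omega
  rw [psi_eq_prod hm h1, psi_eq_prod hm h2, psi_eq_prod hm hi, map_prod,
    ← Finset.prod_mul_distrib]
  refine Finset.prod_congr rfl fun k hk => ?_
  rw [Finset.mem_range] at hk
  have hd : digit m i k ≤ m k - 1 := by have := digit_lt hm i k; omega
  have hconj : (starRingEnd ℂ) (rad m k y) = (rad m k y)⁻¹ :=
    eq_inv_of_mul_eq_one_left (conj_rad_mul k y)
  rw [digit_compl hm hk hi, map_pow, hconj, inv_pow,
    pow_sub₀ _ (rad_ne_zero k y) hd, digit_M_sub_one hm hk]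

lemma D_decomp (hm : ∀ k, 2 ≤ m k) (n j : ℕ) (hj : j ≤ M m n) (y : G m) :
    D m (M m n - j) y = D m (M m n) y - psi m (M m n - 1) y * (starRingEnd ℂ) (D m j y) := by
  have hN := M_pos hm n
  have hkey : D m (M m n) y
      = D m (M m n - j) y + psi m (M m n - 1) y * (starRingEnd ℂ) (D m j y) := by
    unfold D
    rw [map_sum, Finset.mul_sum]
    have h2 : ∑ i ∈ Finset.range j, psi m (M m n - 1) y * (starRingEnd ℂ) (psi m i y)
        = ∑ i ∈ Finset.range j, psi m (M m n - 1 - i) y :=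
      Finset.sum_congr rfl fun i hi =>
        (psi_M_sub hm n i (lt_of_lt_of_le (Finset.mem_range.mp hi) hj) y).symm
    rw [h2]
    have h3 : ∑ i ∈ Finset.range j, psi m (M m n - 1 - i) y
        = ∑ i ∈ Finset.range j, psi m (M m n - j + i) y := by
      have h4 := Finset.sum_range_reflect (fun t => psi m (M m n - j + t) y) j
      refine Eq.trans ?_ h4
      refine Finset.sum_congr rfl fun i hi => ?_
      have := Finset.mem_range.mp hi
      congr 1
      omega
    rw [h3, ← Finset.sum_range_add (fun i => psi m i y) (M m n - j) j,
      Nat.sub_add_cancel hj]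
  rw [hkey]; ring

lemma range_succ_D (j : ℕ) (y : G m) :
    ∑ i ∈ Finset.range (j + 1), D m i y = ∑ i ∈ Finset.Icc 1 j, D m i y := by
  induction j with
  | zero => simp [D]
  | succ j ih =>
      rw [Finset.sum_range_succ, ih, Finset.sum_Icc_succ_top (by omega : 1 ≤ j + 1)]

lemma sumD (j : ℕ) (y : G m) :
    ∑ i ∈ Finset.range (j + 1), D m i y = (j : ℂ) * K m j y := by
  rw [range_succ_D]
  unfold K
  rcases Nat.eq_zero_or_pos j with h | h
  · subst h; simp
  · rw [← mul_assoc, mul_inv_cancel₀ (Nat.cast_ne_zero.mpr h.ne' : (j:ℂ) ≠ 0), one_mul]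

lemma Q_cast (q : ℕ → ℝ) (N : ℕ) : ((Q q N : ℝ) : ℂ) = ∑ j ∈ Finset.range N, ((q j : ℝ) : ℂ) := by
  unfold Q; push_cast; rfl

lemma key1 (hm : ∀ k, 2 ≤ m k) (q : ℕ → ℝ) (n : ℕ) (y : G m) :
    ∑ k ∈ Finset.Icc 1 (M m n), ((q (M m n - k) : ℝ) : ℂ) * D m k y
    = ((Q q (M m n) : ℝ) : ℂ) * D m (M m n) y
      - psi m (M m n - 1) y
        * ∑ j ∈ Finset.range (M m n), ((q j : ℝ) : ℂ) * (starRingEnd ℂ) (D m j y) := by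
  have hN1 : 1 ≤ M m n := M_pos hm n
  have hIcc : ∑ k ∈ Finset.Icc 1 (M m n), ((q (M m n - k) : ℝ) : ℂ) * D m k y
      = ∑ i ∈ Finset.range (M m n), ((q (M m n - (i + 1)) : ℝ) : ℂ) * D m (i + 1) y := by
    rw [← Finset.Ico_add_one_right_eq_Icc, Finset.sum_Ico_eq_sum_range]
    refine Finset.sum_congr (by norm_num) fun i _ => by rw [show 1 + i = i + 1 from by omega]
  rw [hIcc]
  have hterm : ∀ i ∈ Finset.range (M m n),
      ((q (M m n - (i + 1)) : ℝ) : ℂ) * D m (i + 1) y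
      = (fun t => ((q t : ℝ) : ℂ) * D m (M m n) y
          - ((q t : ℝ) : ℂ) * (psi m (M m n - 1) y * (starRingEnd ℂ) (D m t y)))
        (M m n - 1 - i) := by
    intro i hi
    have hi' := Finset.mem_range.mp hi
    show _ = ((q (M m n - 1 - i) : ℝ) : ℂ) * D m (M m n) y
      - ((q (M m n - 1 - i) : ℝ) : ℂ) * (psi m (M m n - 1) y * (starRingEnd ℂ) (D m (M m n - 1 - i) y))
    have h1 : M m n - (i + 1) = M m n - 1 - i := by omega
    have h2 : i + 1 = M m n - (M m n - 1 - i) := by omega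
    rw [h1, h2, D_decomp hm n (M m n - 1 - i) (by omega) y]
    ring
  rw [Finset.sum_congr rfl hterm,
    Finset.sum_range_reflect (fun t => ((q t : ℝ) : ℂ) * D m (M m n) y
      - ((q t : ℝ) : ℂ) * (psi m (M m n - 1) y * (starRingEnd ℂ) (D m t y))) (M m n)]
  rw [Finset.sum_sub_distrib, ← Finset.sum_mul, ← Q_cast, Finset.mul_sum]
  congr 1
  exact Finset.sum_congr rfl fun j _ => by ring

lemma key2 (q : ℕ → ℝ) (n : ℕ) (y : G m) :
    ∑ j ∈ Finset.range (M m n), ((q j : ℝ) : ℂ) * D m j y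
    = ∑ j ∈ Finset.range (M m n - 1), ((q j - q (j + 1) : ℝ) : ℂ) * ((j : ℕ) : ℂ) * K m j y
      + ((q (M m n - 1) : ℝ) : ℂ)
        * (((M m n : ℕ) : ℂ) * K m (M m n) y - D m (M m n) y) := by
  have h := Finset.sum_range_by_parts (fun j => ((q j : ℝ) : ℂ)) (fun j => D m j y) (M m n)
  simp only [smul_eq_mul] at h
  rw [h]
  have h1 : ∑ i ∈ Finset.range (M m n), D m i y
      = ((M m n : ℕ) : ℂ) * K m (M m n) y - D m (M m n) y := by
    have h2 := sumD (m := m) (M m n) y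
    rw [Finset.sum_range_succ] at h2
    linear_combination h2
  rw [h1]
  have h3 : ∀ j ∈ Finset.range (M m n - 1),
      (((q (j + 1) : ℝ) : ℂ) - ((q j : ℝ) : ℂ)) * ∑ i ∈ Finset.range (j + 1), D m i y
      = (((q (j + 1) : ℝ) : ℂ) - ((q j : ℝ) : ℂ)) * ((j : ℂ) * K m j y) := fun j _ => by
    rw [sumD]
  rw [Finset.sum_congr rfl h3]
  have e : ∑ j ∈ Finset.range (M m n - 1), ((q j - q (j + 1) : ℝ) : ℂ) * ((j : ℕ) : ℂ) * K m j y
      = -∑ j ∈ Finset.range (M m n - 1),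
          (((q (j + 1) : ℝ) : ℂ) - ((q j : ℝ) : ℂ)) * ((j : ℂ) * K m j y) := by
    rw [← Finset.sum_neg_distrib]
    exact Finset.sum_congr rfl fun j _ => by push_cast; ring
  rw [e]
  ring

lemma key (hm : ∀ k, 2 ≤ m k) (q : ℕ → ℝ) (n : ℕ) (y : G m) :
    ∑ k ∈ Finset.Icc 1 (M m n), ((q (M m n - k) : ℝ) : ℂ) * D m k y
    = ((Q q (M m n) : ℝ) : ℂ) * D m (M m n) y
      - ∑ j ∈ Finset.range (M m n - 1), ((q j - q (j + 1) : ℝ) : ℂ) * ((j : ℕ) : ℂ)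
          * (psi m (M m n - 1) y * (starRingEnd ℂ) (K m j y))
      - ((q (M m n - 1) : ℝ) : ℂ) * ((M m n : ℕ) : ℂ)
          * (psi m (M m n - 1) y * (starRingEnd ℂ) (K m (M m n) y))
      + ((q (M m n - 1) : ℝ) : ℂ)
          * (psi m (M m n - 1) y * (starRingEnd ℂ) (D m (M m n) y)) := by
  rw [key1 hm]
  have h2 := congrArg (starRingEnd ℂ) (key2 (m := m) q n y)
  simp only [map_sum, map_mul, map_sub, map_add, Complex.conj_ofReal, map_natCast] at h2
  rw [h2]
  have e : psi m (M m n - 1) y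
      * ∑ j ∈ Finset.range (M m n - 1),
          ((q j - q (j + 1) : ℝ) : ℂ) * ((j : ℕ) : ℂ) * (starRingEnd ℂ) (K m j y)
      = ∑ j ∈ Finset.range (M m n - 1), ((q j - q (j + 1) : ℝ) : ℂ) * ((j : ℕ) : ℂ)
          * (psi m (M m n - 1) y * (starRingEnd ℂ) (K m j y)) := by
    rw [Finset.mul_sum]
    exact Finset.sum_congr rfl fun j _ => by ring
  rw [mul_add, e]
  ring

lemma measurable_rad (k : ℕ) : Measurable (rad m k) := by
  have h1 : Measurable (fun z : ZMod (m k) =>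
      Complex.exp (2 * Real.pi * Complex.I * (z.val : ℂ) / (m k : ℂ))) := measurable_from_top
  exact h1.comp (measurable_pi_apply k)

lemma measurable_psi (hm : ∀ k, 2 ≤ m k) (ℓ : ℕ) : Measurable (psi m ℓ) := by
  have h : psi m ℓ = fun x => ∏ k ∈ Finset.range ℓ, rad m k x ^ digit m ℓ k :=
    funext fun x => psi_eq_prod hm (lt_M_self hm ℓ) x
  rw [h]
  exact Finset.measurable_prod _ fun k _ => (measurable_rad k).pow_const _

lemma measurable_D (hm : ∀ k, 2 ≤ m k) (j : ℕ) : Measurable (D m j) := by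
  unfold D
  exact Finset.measurable_sum _ fun k _ => measurable_psi hm k

lemma measurable_K (hm : ∀ k, 2 ≤ m k) (j : ℕ) : Measurable (K m j) := by
  unfold K
  exact (Finset.measurable_sum _ fun k _ => measurable_D hm k).const_mul _

lemma norm_D_le (hm : ∀ k, 2 ≤ m k) (j : ℕ) (y : G m) : ‖D m j y‖ ≤ (j : ℝ) := by
  unfold D
  calc ‖∑ k ∈ Finset.range j, psi m k y‖ ≤ ∑ k ∈ Finset.range j, ‖psi m k y‖ :=
        norm_sum_le _ _
  _ = (j : ℝ) := by simp [norm_psi hm]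

lemma norm_K_le (hm : ∀ k, 2 ≤ m k) (j : ℕ) (y : G m) : ‖K m j y‖ ≤ (j : ℝ) * (j : ℝ) := by
  unfold K
  rw [norm_mul]
  have h1 : ‖((j : ℂ))⁻¹‖ ≤ 1 := by
    rcases Nat.eq_zero_or_pos j with h | h
    · simp [h]
    · rw [norm_inv, Complex.norm_natCast]
      rw [inv_le_one_iff₀]
      right
      exact_mod_cast h
  have h2 : ‖∑ k ∈ Finset.Icc 1 j, D m k y‖ ≤ (j : ℝ) * (j : ℝ) := by
    calc ‖∑ k ∈ Finset.Icc 1 j, D m k y‖ ≤ ∑ k ∈ Finset.Icc 1 j, ‖D m k y‖ := norm_sum_le _ _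
    _ ≤ ∑ k ∈ Finset.Icc 1 j, (j : ℝ) := Finset.sum_le_sum fun k hk =>
          le_trans (norm_D_le hm k y) (by exact_mod_cast (Finset.mem_Icc.mp hk).2)
    _ = ((Finset.Icc 1 j).card : ℝ) * (j : ℝ) := by rw [Finset.sum_const, nsmul_eq_mul]
    _ ≤ (j : ℝ) * (j : ℝ) := by
          rw [Nat.card_Icc]
          gcongr
          exact_mod_cast by omega
  calc ‖((j : ℂ))⁻¹‖ * ‖∑ k ∈ Finset.Icc 1 j, D m k y‖ ≤ 1 * ((j : ℝ) * (j : ℝ)) :=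
        mul_le_mul h1 h2 (norm_nonneg _) (by norm_num)
  _ = (j : ℝ) * (j : ℝ) := one_mul _

lemma integrable_mul_shift (μ : Measure (G m)) (f : G m → ℂ) (hf : Integrable f μ)
    (g : G m → ℂ) (hg : Measurable g) (C : ℝ) (hC : ∀ y, ‖g y‖ ≤ C) (x : G m) :
    Integrable (fun t => f t * g (x - t)) μ := by
  have hsub : Measurable (fun t : G m => x - t) := by measurability
  have hmeas : AEStronglyMeasurable (fun t => g (x - t)) μ :=
    (hg.comp hsub).aestronglyMeasurable
  exact (hf.bdd_mul hmeas (Filter.Eventually.of_forall fun t => hC _)).congr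
    (Filter.Eventually.of_forall fun t => mul_comm _ _)

lemma S_eq (hm : ∀ k, 2 ≤ m k) (μ : Measure (G m)) (f : G m → ℂ) (hf : Integrable f μ)
    (k : ℕ) (x : G m) :
    S m μ k f x = ∫ t, f t * D m k (x - t) ∂μ := by
  have hint : ∀ i : ℕ, Integrable (fun t => f t * psi m i (x - t)) μ := fun i =>
    integrable_mul_shift μ f hf (psi m i) (measurable_psi hm i) 1
      (fun y => le_of_eq (norm_psi hm i y)) x
  have hrhs : ∫ t, f t * D m k (x - t) ∂μ
      = ∑ i ∈ Finset.range k, ∫ t, f t * psi m i (x - t) ∂μ := by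
    rw [show (fun t => f t * D m k (x - t))
        = (fun t => ∑ i ∈ Finset.range k, f t * psi m i (x - t)) from
      funext fun t => by unfold D; rw [Finset.mul_sum]]
    exact integral_finset_sum _ fun i _ => hint i
  rw [hrhs]
  unfold S fourierCoeff
  refine Finset.sum_congr rfl fun i _ => ?_
  rw [← MeasureTheory.integral_mul_const]
  refine integral_congr_ae (Filter.Eventually.of_forall fun t => ?_)
  show f t * (starRingEnd ℂ) (psi m i t) * psi m i x = f t * psi m i (x - t)
  rw [psi_sub hm]
  ring

theorem norlund_main
    (hm : ∀ k, 2 ≤ m k)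
    (μ : Measure (G m)) [IsProbabilityMeasure μ]
    (q : ℕ → ℝ) (hq0 : 0 < q 0) (hqnn : ∀ k, 0 ≤ q k)
    (f : G m → ℂ) (hf : MemLp f 1 μ) (n : ℕ) :
    ∀ x : G m, T m μ q (M m n) f x =
      conv m μ (D m (M m n)) f x
      - ((Q q (M m n) : ℝ) : ℂ)⁻¹ *
          ∑ j ∈ Finset.range (M m n - 1), ((q j - q (j + 1) : ℝ) : ℂ) * (j : ℂ) *
            conv m μ (fun t => psi m (M m n - 1) t * (starRingEnd ℂ) (K m j t)) f x
      - ((q (M m n - 1) / Q q (M m n) : ℝ) : ℂ) * ((M m n : ℕ) : ℂ) *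
          conv m μ (fun t => psi m (M m n - 1) t * (starRingEnd ℂ) (K m (M m n) t)) f x
      + ((q (M m n - 1) / Q q (M m n) : ℝ) : ℂ) *
          conv m μ (fun t => psi m (M m n - 1) t * (starRingEnd ℂ) (D m (M m n) t)) f x := by
  intro x
  have hfi : Integrable f μ := memLp_one_iff_integrable.mp hf
  have hN1 : 1 ≤ M m n := M_pos hm n
  have hQpos : 0 < Q q (M m n) := by
    have h := Finset.single_le_sum (f := q) (fun i _ => hqnn i) (Finset.mem_range.mpr hN1)
    have : Q q (M m n) = ∑ k ∈ Finset.range (M m n), q k := rfl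
    linarith [h]
  have hQ0 : ((Q q (M m n) : ℝ) : ℂ) ≠ 0 := Complex.ofReal_ne_zero.mpr (ne_of_gt hQpos)
  have hgD : ∀ j : ℕ, Integrable (fun t => f t * D m j (x - t)) μ := fun j =>
    integrable_mul_shift μ f hfi _ (measurable_D hm j) j (norm_D_le hm j) x
  have hpsiK : ∀ j : ℕ, Integrable
      (fun t => f t * (psi m (M m n - 1) (x - t) * (starRingEnd ℂ) (K m j (x - t)))) μ := by
    intro j
    refine integrable_mul_shift μ f hfi
      (fun y => psi m (M m n - 1) y * (starRingEnd ℂ) (K m j y))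
      ((measurable_psi hm _).mul ((RCLike.continuous_conj.measurable).comp (measurable_K hm j))) ((j : ℝ) * (j : ℝ)) (fun y => ?_) x
    rw [norm_mul, norm_psi hm, one_mul, RCLike.norm_conj]
    exact norm_K_le hm j y
  have hpsiD : Integrable
      (fun t => f t * (psi m (M m n - 1) (x - t) * (starRingEnd ℂ) (D m (M m n) (x - t)))) μ := by
    refine integrable_mul_shift μ f hfi
      (fun y => psi m (M m n - 1) y * (starRingEnd ℂ) (D m (M m n) y))
      ((measurable_psi hm _).mul ((RCLike.continuous_conj.measurable).comp (measurable_D hm (M m n)))) ((M m n : ℝ)) (fun y => ?_) x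
    rw [norm_mul, norm_psi hm, one_mul, RCLike.norm_conj]
    exact norm_D_le hm _ y
  have e1 : ∑ k ∈ Finset.Icc 1 (M m n), ((q (M m n - k) : ℝ) : ℂ) * S m μ k f x
      = ∫ t, f t * ∑ k ∈ Finset.Icc 1 (M m n), ((q (M m n - k) : ℝ) : ℂ) * D m k (x - t) ∂μ := by
    calc ∑ k ∈ Finset.Icc 1 (M m n), ((q (M m n - k) : ℝ) : ℂ) * S m μ k f x
        = ∑ k ∈ Finset.Icc 1 (M m n),
            ∫ t, ((q (M m n - k) : ℝ) : ℂ) * (f t * D m k (x - t)) ∂μ :=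
          Finset.sum_congr rfl fun k _ => by
            rw [S_eq hm μ f hfi k x]; exact (integral_const_mul _ _).symm
      _ = ∫ t, ∑ k ∈ Finset.Icc 1 (M m n), ((q (M m n - k) : ℝ) : ℂ) * (f t * D m k (x - t)) ∂μ :=
          (integral_finset_sum _ fun k _ => (hgD k).const_mul _).symm
      _ = ∫ t, f t * ∑ k ∈ Finset.Icc 1 (M m n), ((q (M m n - k) : ℝ) : ℂ) * D m k (x - t) ∂μ :=
          integral_congr_ae (Filter.Eventually.of_forall fun t => by
            beta_reduce
            rw [Finset.mul_sum]
            exact Finset.sum_congr rfl fun k _ => by ring)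
  have e2 : ∫ t, f t * ∑ k ∈ Finset.Icc 1 (M m n), ((q (M m n - k) : ℝ) : ℂ) * D m k (x - t) ∂μ
      = ((Q q (M m n) : ℝ) : ℂ) * ∫ t, f t * D m (M m n) (x - t) ∂μ
        - ∑ j ∈ Finset.range (M m n - 1), ((q j - q (j + 1) : ℝ) : ℂ) * (j : ℂ)
            * ∫ t, f t * (psi m (M m n - 1) (x - t) * (starRingEnd ℂ) (K m j (x - t))) ∂μ
        - (((q (M m n - 1) : ℝ) : ℂ) * ((M m n : ℕ) : ℂ))
            * ∫ t, f t * (psi m (M m n - 1) (x - t) * (starRingEnd ℂ) (K m (M m n) (x - t))) ∂μ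
        + ((q (M m n - 1) : ℝ) : ℂ)
            * ∫ t, f t * (psi m (M m n - 1) (x - t) * (starRingEnd ℂ) (D m (M m n) (x - t))) ∂μ := by
    have hI1 : Integrable (fun t => ((Q q (M m n) : ℝ) : ℂ) * (f t * D m (M m n) (x - t))) μ :=
      (hgD _).const_mul _
    have hI2 : Integrable (fun t => ∑ j ∈ Finset.range (M m n - 1),
        (((q j - q (j + 1) : ℝ) : ℂ) * (j : ℂ))
          * (f t * (psi m (M m n - 1) (x - t) * (starRingEnd ℂ) (K m j (x - t))))) μ :=
      integrable_finset_sum _ fun j _ => (hpsiK j).const_mul _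
    have hI3 : Integrable (fun t => (((q (M m n - 1) : ℝ) : ℂ) * ((M m n : ℕ) : ℂ))
        * (f t * (psi m (M m n - 1) (x - t) * (starRingEnd ℂ) (K m (M m n) (x - t))))) μ :=
      (hpsiK _).const_mul _
    have hI4 : Integrable (fun t => ((q (M m n - 1) : ℝ) : ℂ)
        * (f t * (psi m (M m n - 1) (x - t) * (starRingEnd ℂ) (D m (M m n) (x - t))))) μ :=
      hpsiD.const_mul _
    calc ∫ t, f t * ∑ k ∈ Finset.Icc 1 (M m n), ((q (M m n - k) : ℝ) : ℂ) * D m k (x - t) ∂μ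
        = ∫ t, (((Q q (M m n) : ℝ) : ℂ) * (f t * D m (M m n) (x - t))
            - (∑ j ∈ Finset.range (M m n - 1), (((q j - q (j + 1) : ℝ) : ℂ) * (j : ℂ))
                * (f t * (psi m (M m n - 1) (x - t) * (starRingEnd ℂ) (K m j (x - t)))))
            - (((q (M m n - 1) : ℝ) : ℂ) * ((M m n : ℕ) : ℂ))
                * (f t * (psi m (M m n - 1) (x - t) * (starRingEnd ℂ) (K m (M m n) (x - t))))
            + ((q (M m n - 1) : ℝ) : ℂ)
                * (f t * (psi m (M m n - 1) (x - t) * (starRingEnd ℂ) (D m (M m n) (x - t))))) ∂μ := by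
          refine integral_congr_ae (Filter.Eventually.of_forall fun t => ?_)
          beta_reduce
          rw [key hm q n (x - t), mul_add, mul_sub, mul_sub, Finset.mul_sum]
          have hc : ∑ j ∈ Finset.range (M m n - 1),
              f t * (((q j - q (j + 1) : ℝ) : ℂ) * ((j : ℕ) : ℂ)
                * (psi m (M m n - 1) (x - t) * (starRingEnd ℂ) (K m j (x - t))))
              = ∑ j ∈ Finset.range (M m n - 1), (((q j - q (j + 1) : ℝ) : ℂ) * (j : ℂ))
                * (f t * (psi m (M m n - 1) (x - t) * (starRingEnd ℂ) (K m j (x - t)))) :=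
            Finset.sum_congr rfl fun j _ => by ring
          rw [hc]
          ring
      _ = _ := by
          have hI12 : Integrable (fun t => ((Q q (M m n) : ℝ) : ℂ) * (f t * D m (M m n) (x - t))
              - ∑ j ∈ Finset.range (M m n - 1), (((q j - q (j + 1) : ℝ) : ℂ) * (j : ℂ))
                  * (f t * (psi m (M m n - 1) (x - t) * (starRingEnd ℂ) (K m j (x - t))))) μ :=
            hI1.sub hI2
          have hI123 : Integrable (fun t => (((Q q (M m n) : ℝ) : ℂ) * (f t * D m (M m n) (x - t))
              - ∑ j ∈ Finset.range (M m n - 1), (((q j - q (j + 1) : ℝ) : ℂ) * (j : ℂ))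
                  * (f t * (psi m (M m n - 1) (x - t) * (starRingEnd ℂ) (K m j (x - t)))))
              - (((q (M m n - 1) : ℝ) : ℂ) * ((M m n : ℕ) : ℂ))
                  * (f t * (psi m (M m n - 1) (x - t) * (starRingEnd ℂ) (K m (M m n) (x - t))))) μ :=
            hI12.sub hI3
          rw [integral_add hI123 hI4, integral_sub hI12 hI3,
            integral_sub hI1 hI2, integral_const_mul, integral_const_mul, integral_const_mul,
            integral_finset_sum _ fun j _ => (hpsiK j).const_mul _]
          rw [Finset.sum_congr rfl fun j (_ : j ∈ Finset.range (M m n - 1)) =>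
            integral_const_mul (((q j - q (j + 1) : ℝ) : ℂ) * (j : ℂ)) _]
  unfold T conv
  rw [e1, e2]
  simp only [Complex.ofReal_div]
  field_simp

end AuxLemmas

/-- kernel representation of `t_(M_n) f` via Fejér kernels. -/
theorem norlund_Mn_fejer_kernel_representation
    (m : ℕ → ℕ) (hm : ∀ k, 2 ≤ m k)
    (R : ℝ) (hR : IsLUB (Set.range fun k => (m k : ℝ)) R)
    (μ : Measure (G m)) [IsProbabilityMeasure μ] [μ.IsAddHaarMeasure]
    (q : ℕ → ℝ) (hq0 : 0 < q 0) (hqnn : ∀ k, 0 ≤ q k)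
    (f : G m → ℂ) (hf : MemLp f 1 μ) (n : ℕ) :
    ∀ x : G m, T m μ q (M m n) f x =
      conv m μ (D m (M m n)) f x
      - ((Q q (M m n) : ℝ) : ℂ)⁻¹ *
          ∑ j ∈ Finset.range (M m n - 1), ((q j - q (j + 1) : ℝ) : ℂ) * (j : ℂ) *
            conv m μ (fun t => psi m (M m n - 1) t * (starRingEnd ℂ) (K m j t)) f x
      - ((q (M m n - 1) / Q q (M m n) : ℝ) : ℂ) * ((M m n : ℕ) : ℂ) *
          conv m μ (fun t => psi m (M m n - 1) t * (starRingEnd ℂ) (K m (M m n) t)) f x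
      + ((q (M m n - 1) / Q q (M m n) : ℝ) : ℂ) *
          conv m μ (fun t => psi m (M m n - 1) t * (starRingEnd ℂ) (D m (M m n) t)) f x :=
  norlund_main hm μ q hq0 hqnn f hf n

end VilenkinPaper
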